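/- Let Δx > 0 and 0 < H ≤ Δx, and let η : ℝ → ℝ be a function that is C² and non-decreasing on [−1,0] with η(−1) = 0 and ∫_{−1}^0 η(x) dx = 1, and η = 0 outside [−1,0]; set η_H(x) = η(x/H)/H and N_H = ⌈H/Δx⌉. Then N_H = 1, and for every bounded grid function (f_j)_{j∈ℤ} the discrete convolution (f *_Δ η_H)_j := ( Σ_{i=0}^{N_H−1} f_{j+i} · η_H(−iΔx) ) / ( Σ_{i=0}^{N_H−1} η_H(−iΔx) ) satisfies (f *_Δ η_H)_j = f_j for every j ∈ ℤ. -/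
import Mathlib


/-- If `0 < H ≤ Δx`, then `N_H = ⌈H/Δx⌉ = 1` and the discrete
convolution with the rescaled kernel `η_H(x) = η(x/H)/H`,
`(f *_Δ η_H)_j = (Σ_{i=0}^{N_H-1} f_{j+i} η_H(-iΔx)) / (Σ_{i=0}^{N_H-1} η_H(-iΔx))`,
reduces to pointwise evaluation: `(f *_Δ η_H)_j = f_j` for every bounded grid
function `f`. -/
theorem stmt9 (dx H : ℝ) (hdx : 0 < dx) (hH : 0 < H) (hHdx : H ≤ dx)
    (η : ℝ → ℝ)
    (hη2 : ContDiffOn ℝ 2 η (Set.Icc (-1 : ℝ) 0))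
    (hmono : MonotoneOn η (Set.Icc (-1 : ℝ) 0))
    (hη1 : η (-1) = 0)
    (hint : (∫ x in (-1 : ℝ)..0, η x) = 1)
    (hout : ∀ x, x ∉ Set.Icc (-1 : ℝ) 0 → η x = 0) :
    ⌈H / dx⌉₊ = 1 ∧
    ∀ f : ℤ → ℝ, (∃ C, ∀ j, |f j| ≤ C) → ∀ j : ℤ,
      (∑ i ∈ Finset.range ⌈H / dx⌉₊, f (j + (i : ℤ)) * (η ((-(i : ℝ) * dx) / H) / H)) /
        (∑ i ∈ Finset.range ⌈H / dx⌉₊, η ((-(i : ℝ) * dx) / H) / H) = f j := by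
  have hceil : ⌈H / dx⌉₊ = 1 := by
    have h1 : H / dx ≤ 1 := (div_le_one hdx).2 hHdx
    have h0 : 0 < H / dx := div_pos hH hdx
    have hle : ⌈H / dx⌉₊ ≤ 1 := Nat.ceil_le.2 (by exact_mod_cast h1)
    have hpos : 0 < ⌈H / dx⌉₊ := Nat.ceil_pos.2 h0
    omega
  refine ⟨hceil, ?_⟩
  have hη0 : η 0 ≠ 0 := by
    intro h0
    have hzero : ∀ x ∈ Set.Icc (-1 : ℝ) 0, η x = 0 := by
      intro x hx
      have hle1 : η (-1) ≤ η x := hmono (by simp) hx hx.1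
      have hle2 : η x ≤ η 0 := hmono hx (by simp) hx.2
      rw [hη1] at hle1; rw [h0] at hle2; linarith
    have : (∫ x in (-1 : ℝ)..0, η x) = 0 := by
      rw [intervalIntegral.integral_congr (g := fun _ => (0 : ℝ))
        (by intro x hx; exact hzero x (by rwa [Set.uIcc_of_le (by norm_num)] at hx))]
      simp
    rw [hint] at this; norm_num at this
  intro f _ j
  rw [hceil]
  simp only [Finset.sum_range_one, Nat.cast_zero, neg_zero, zero_mul, zero_div,
    Int.cast_zero, add_zero]
  rw [mul_div_assoc]
  field_simp
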